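/- For every integer d ≥ 1 and every integer p ≥ 0 there exist a constant C > 0 and an exponent r ∈ ℝ such that for all integers k with 2k > p, the inequality of real numbers (d(2k−p))! / ((2k−p+d)!)^d ≥ C · k^r · d^{2kd} holds. -/

import Mathlib

lemma auxA (a : ℕ) : ∀ m : ℕ, a.factorial * a ^ m * (a + m + 1) ≤ (a + m + 1).factorial := by
  intro m
  induction m with
  | zero => simp [Nat.factorial_succ, Nat.mul_comm]
  | succ m ih =>
    have h1 : a.factorial * a ^ (m+1) * (a + (m+1) + 1)
        ≤ (a.factorial * a ^ m * (a + m + 1)) * (a + m + 2) := by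
      have : a.factorial * a ^ (m+1) = a.factorial * a ^ m * a := by ring
      rw [this]
      have : a + (m+1) + 1 = a + m + 2 := by ring
      rw [this]
      exact Nat.mul_le_mul (Nat.mul_le_mul_left _ (by omega)) (le_refl _)
    calc a.factorial * a ^ (m+1) * (a + (m+1) + 1)
        ≤ (a.factorial * a ^ m * (a + m + 1)) * (a + m + 2) := h1
      _ ≤ (a + m + 1).factorial * (a + m + 2) := Nat.mul_le_mul_right _ ih
      _ = (a + (m+1) + 1).factorial := by
          rw [show a + (m+1) + 1 = (a + m + 1) + 1 by ring,
            show ((a+m+1)+1).factorial = ((a+m+1)+1) * (a+m+1).factorial from Nat.factorial_succ _]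
          ring

lemma auxB (e : ℕ) : ∀ n : ℕ, 1 ≤ n →
    (e+1) ^ ((e+1)*n) * n.factorial ^ (e+1) * (e+1).factorial
      ≤ ((e+1)*n).factorial * n ^ e * (e+1) ^ (e+1) := by
  intro n
  induction n with
  | zero => omega
  | succ n ih =>
    intro _
    rcases Nat.eq_zero_or_pos n with h0 | hn
    · subst h0; simp [Nat.mul_comm]
    have IH := ih hn
    have key : ((e+1)*n).factorial * ((e+1)*n) ^ e * ((e+1)*n + e + 1)
        ≤ ((e+1)*n + e + 1).factorial := auxA ((e+1)*n) e
    have step : (((e+1)*n).factorial * n ^ e) * ((e+1)*(n+1)) ^ (e+1)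
        ≤ ((e+1)*(n+1)).factorial * (n+1) ^ e := by
      have e1 : (((e+1)*n).factorial * n ^ e) * ((e+1)*(n+1)) ^ (e+1)
          = (((e+1)*n).factorial * ((e+1)*n) ^ e * ((e+1)*n + e + 1)) * (n+1) ^ e := by
        rw [show (e+1)*n + e + 1 = (e+1)*(n+1) from by ring]
        simp only [mul_pow, pow_succ]
        ring
      rw [e1]
      have e2 : ((e+1)*(n+1)).factorial = ((e+1)*n + e + 1).factorial := by
        rw [show (e+1)*(n+1) = (e+1)*n + e + 1 from by ring]
      rw [e2]
      exact Nat.mul_le_mul_right _ key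
    calc (e+1) ^ ((e+1)*(n+1)) * (n+1).factorial ^ (e+1) * (e+1).factorial
        = ((e+1) ^ ((e+1)*n) * n.factorial ^ (e+1) * (e+1).factorial) * ((e+1)*(n+1)) ^ (e+1) := by
          have h2 : ((e+1)*(n+1)) ^ (e+1) = (e+1)^(e+1) * (n+1)^(e+1) := mul_pow _ _ _
          have h3 : (e+1)^((e+1)*(n+1)) = (e+1)^((e+1)*n) * (e+1)^(e+1) := by
            rw [show (e+1)*(n+1) = (e+1)*n + (e+1) from by ring, pow_add]
          have h4 : (n+1).factorial ^ (e+1) = n.factorial^(e+1) * (n+1)^(e+1) := by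
            rw [Nat.factorial_succ, mul_pow]; ring
          rw [h2, h3, h4]; ring
      _ ≤ (((e+1)*n).factorial * n ^ e * (e+1) ^ (e+1)) * ((e+1)*(n+1)) ^ (e+1) :=
          Nat.mul_le_mul_right _ IH
      _ = ((((e+1)*n).factorial * n ^ e) * ((e+1)*(n+1)) ^ (e+1)) * (e+1) ^ (e+1) := by ring
      _ ≤ (((e+1)*(n+1)).factorial * (n+1) ^ e) * (e+1) ^ (e+1) :=
          Nat.mul_le_mul_right _ step

lemma auxC (n : ℕ) : ∀ m : ℕ, (n + m).factorial ≤ n.factorial * (n + m) ^ m := by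
  intro m
  induction m with
  | zero => simp
  | succ m ih =>
    calc (n + (m+1)).factorial = (n + m + 1) * (n + m).factorial := by
          rw [show n + (m+1) = (n+m) + 1 by ring, Nat.factorial_succ]
      _ ≤ (n + m + 1) * (n.factorial * (n + m) ^ m) := Nat.mul_le_mul_left _ ih
      _ ≤ (n + m + 1) * (n.factorial * (n + m + 1) ^ m) := by
          exact Nat.mul_le_mul_left _ (Nat.mul_le_mul_left _ (Nat.pow_le_pow_left (by omega) m))
      _ = n.factorial * (n + (m+1)) ^ (m+1) := by
          rw [show n + (m+1) = n + m + 1 by ring]; ring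

theorem stmt13 (d p : ℕ) (hd : 1 ≤ d) :
    ∃ (C r : ℝ), 0 < C ∧ ∀ k : ℕ, p < 2 * k →
      C * (k : ℝ) ^ r * (d : ℝ) ^ (2 * k * d) ≤
        (Nat.factorial (d * (2 * k - p)) : ℝ) /
          ((Nat.factorial (2 * k - p + d) : ℝ)) ^ d := by
  obtain ⟨e, rfl⟩ : ∃ e, d = e + 1 := ⟨d - 1, by omega⟩
  set E : ℕ := (e+1)^((e+1)*p) * (e+1)^(e+1) * 2^e * (e+3)^((e+1)*(e+1)) with hE
  have hEpos : 0 < E := by positivity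
  set N : ℕ := (e+1)*(e+1) + e with hN
  refine ⟨(Nat.factorial (e+1) : ℝ) / (E : ℝ), -(N : ℝ), by positivity, ?_⟩
  intro k hpk
  set n : ℕ := 2 * k - p with hn
  have hn1 : 1 ≤ n := by omega
  have hk1 : 1 ≤ k := by omega
  have hnp : n + p = 2 * k := by omega
  have hk0 : (0:ℝ) < (k:ℝ) := by exact_mod_cast hk1
  have hkN : (k:ℝ) ^ (-(N:ℝ)) = ((k:ℝ) ^ N)⁻¹ := by
    rw [Real.rpow_neg hk0.le, Real.rpow_natCast]
  -- nat inequality for the denominator bound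
  have hNat1 : ((n+(e+1)).factorial)^(e+1) * n^e
      ≤ (n.factorial)^(e+1) * ((e+3)*k)^((e+1)*(e+1)) * (2*k)^e := by
    have h1 : ((n+(e+1)).factorial)^(e+1) ≤ (n.factorial)^(e+1) * (n+(e+1))^((e+1)*(e+1)) := by
      calc ((n+(e+1)).factorial)^(e+1)
          ≤ (n.factorial * (n+(e+1))^(e+1))^(e+1) :=
            Nat.pow_le_pow_left (auxC n (e+1)) _
        _ = (n.factorial)^(e+1) * (n+(e+1))^((e+1)*(e+1)) := by
            rw [mul_pow, ← pow_mul]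
    have h2 : (n+(e+1))^((e+1)*(e+1)) ≤ ((e+3)*k)^((e+1)*(e+1)) :=
      Nat.pow_le_pow_left (by nlinarith) _
    have h3 : n^e ≤ (2*k)^e := Nat.pow_le_pow_left (by omega) _
    calc ((n+(e+1)).factorial)^(e+1) * n^e
        ≤ ((n.factorial)^(e+1) * ((e+3)*k)^((e+1)*(e+1))) * (2*k)^e := by
          exact Nat.mul_le_mul (h1.trans (Nat.mul_le_mul_left _ h2)) h3
      _ = (n.factorial)^(e+1) * ((e+3)*k)^((e+1)*(e+1)) * (2*k)^e := by ring
  have hB := auxB e n hn1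
  -- cast to ℝ
  have hBr : ((e+1:ℕ):ℝ) ^ ((e+1)*n) * ((n.factorial : ℝ))^(e+1) * ((e+1).factorial : ℝ)
      ≤ (((e+1)*n).factorial : ℝ) * (n:ℝ)^e * ((e+1:ℕ):ℝ)^(e+1) := by exact_mod_cast hB
  have hfacpos : (0:ℝ) < ((n+(e+1)).factorial : ℝ)^(e+1) := by positivity
  rw [le_div_iff₀ hfacpos]
  have hA : (0:ℝ) < (n:ℝ)^e * ((e+1:ℕ):ℝ)^(e+1) := by positivity
  have h_main : ((Nat.factorial (e+1) : ℝ) / (E : ℝ)) * (k:ℝ) ^ (-(N:ℝ)) *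
        ((e+1:ℕ):ℝ) ^ (2*k*(e+1)) * ((n+(e+1)).factorial : ℝ)^(e+1) * ((n:ℝ)^e * ((e+1:ℕ):ℝ)^(e+1))
      ≤ ((e+1:ℕ):ℝ) ^ ((e+1)*n) * ((n.factorial : ℝ))^(e+1) * ((e+1).factorial : ℝ) := by
    have hsplit : ((e+1:ℕ):ℝ) ^ (2*k*(e+1)) = ((e+1:ℕ):ℝ) ^ ((e+1)*n) * ((e+1:ℕ):ℝ) ^ ((e+1)*p) := by
      rw [← pow_add]
      congr 1
      rw [show 2*k = n + p from hnp.symm]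
      ring
    have hNat1r : (((n+(e+1)).factorial : ℝ))^(e+1) * (n:ℝ)^e
        ≤ ((n.factorial : ℝ))^(e+1) * (((e+3)*k : ℕ):ℝ)^((e+1)*(e+1)) * ((2*k : ℕ):ℝ)^e := by
      exact_mod_cast hNat1
    have hkNe : ((k:ℝ) ^ N) ≠ 0 := by positivity
    have hc1 : (((e+3)*k : ℕ):ℝ) ^ ((e+1)*(e+1))
        = ((e+3:ℕ):ℝ)^((e+1)*(e+1)) * (k:ℝ)^((e+1)*(e+1)) := by
      push_cast [mul_pow]; ring
    have hc2 : ((2*k : ℕ):ℝ) ^ e = (2:ℝ)^e * (k:ℝ)^e := by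
      push_cast [mul_pow]; ring
    have hE' : (E : ℝ) = ((e+1:ℕ):ℝ)^((e+1)*p) * ((e+1:ℕ):ℝ)^(e+1) * (2:ℝ)^e
        * ((e+3:ℕ):ℝ)^((e+1)*(e+1)) := by
      rw [hE]; push_cast; ring
    calc ((Nat.factorial (e+1) : ℝ) / (E : ℝ)) * (k:ℝ) ^ (-(N:ℝ)) *
            ((e+1:ℕ):ℝ) ^ (2*k*(e+1)) * ((n+(e+1)).factorial : ℝ)^(e+1) * ((n:ℝ)^e * ((e+1:ℕ):ℝ)^(e+1))
        = (((Nat.factorial (e+1) : ℝ) / (E : ℝ)) * ((k:ℝ)^N)⁻¹ * ((e+1:ℕ):ℝ) ^ ((e+1)*p)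
            * ((e+1:ℕ):ℝ) ^ ((e+1)*n) * ((e+1:ℕ):ℝ)^(e+1))
            * ((((n+(e+1)).factorial : ℝ))^(e+1) * (n:ℝ)^e) := by
          rw [hkN, hsplit]; ring
      _ ≤ (((Nat.factorial (e+1) : ℝ) / (E : ℝ)) * ((k:ℝ)^N)⁻¹ * ((e+1:ℕ):ℝ) ^ ((e+1)*p)
            * ((e+1:ℕ):ℝ) ^ ((e+1)*n) * ((e+1:ℕ):ℝ)^(e+1))
            * (((n.factorial : ℝ))^(e+1) * (((e+3)*k : ℕ):ℝ)^((e+1)*(e+1)) * ((2*k : ℕ):ℝ)^e) := by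
          refine mul_le_mul_of_nonneg_left hNat1r (by positivity)
      _ = ((e+1:ℕ):ℝ) ^ ((e+1)*n) * ((n.factorial : ℝ))^(e+1) *
            (((Nat.factorial (e+1) : ℝ) / (E : ℝ)) * (E:ℝ) *
              ((k:ℝ)^((e+1)*(e+1)) * (k:ℝ)^e * ((k:ℝ)^N)⁻¹)) := by
          rw [hc1, hc2, hE']; ring
      _ = ((e+1:ℕ):ℝ) ^ ((e+1)*n) * ((n.factorial : ℝ))^(e+1) * ((e+1).factorial : ℝ) := by
          rw [← pow_add, ← hN, mul_inv_cancel₀ hkNe,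
            div_mul_cancel₀ _ (by positivity : (E:ℝ) ≠ 0)]
          ring
  -- combine h_main with hBr
  have hgoal : ((Nat.factorial (e+1) : ℝ) / (E : ℝ)) * (k:ℝ) ^ (-(N:ℝ)) *
        ((e+1:ℕ):ℝ) ^ (2*k*(e+1)) * ((n+(e+1)).factorial : ℝ)^(e+1)
      ≤ (((e+1)*n).factorial : ℝ) := by
    rw [← mul_le_mul_iff_of_pos_right hA]
    calc ((Nat.factorial (e+1) : ℝ) / (E : ℝ)) * (k:ℝ) ^ (-(N:ℝ)) *
            ((e+1:ℕ):ℝ) ^ (2*k*(e+1)) * ((n+(e+1)).factorial : ℝ)^(e+1) * ((n:ℝ)^e * ((e+1:ℕ):ℝ)^(e+1))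
        ≤ ((e+1:ℕ):ℝ) ^ ((e+1)*n) * ((n.factorial : ℝ))^(e+1) * ((e+1).factorial : ℝ) := h_main
      _ ≤ (((e+1)*n).factorial : ℝ) * (n:ℝ)^e * ((e+1:ℕ):ℝ)^(e+1) := hBr
      _ = (((e+1)*n).factorial : ℝ) * ((n:ℝ)^e * ((e+1:ℕ):ℝ)^(e+1)) := by ring
  exact hgoal
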